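/- Let S₁, S₂ ∈ S^n_{++} with largest eigenvalues λ_max(S₁), λ_max(S₂), and let ΔS := S₁ - S₂. Then ⟨S₁^{-1} ΔS S₂^{-1}, ΔS⟩ ≥ λ_max(S₁)^{-1} λ_max(S₂)^{-1} ‖ΔS‖², where ⟨X,Y⟩ := tr(XᵀY) and ‖·‖ is the Frobenius norm. -/

import Mathlib

open Matrix

noncomputable section

/-- Trace inner product ⟨A,B⟩ = tr(Aᵀ B). -/
def tInner {n : ℕ} (A B : Matrix (Fin n) (Fin n) ℝ) : ℝ :=
  Matrix.trace (Aᵀ * B)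

/-- Frobenius norm. -/
def frob {n : ℕ} (A : Matrix (Fin n) (Fin n) ℝ) : ℝ :=
  Real.sqrt (tInner A A)

/-- Largest eigenvalue of a Hermitian (symmetric real) matrix. -/
def lamMax {n : ℕ} {S : Matrix (Fin n) (Fin n) ℝ} (hS : S.IsHermitian) : ℝ :=
  ⨆ i, hS.eigenvalues i

lemma trace_nonneg' {m : Type*} [Fintype m] [DecidableEq m] {M : Matrix m m ℝ}
    (hM : M.PosSemidef) : 0 ≤ M.trace := by
  rw [Matrix.trace]
  apply Finset.sum_nonneg
  intro i _
  have := hM.dotProduct_mulVec_nonneg (Pi.single i 1)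
  simpa [Matrix.mulVec_single, dotProduct, Pi.single_apply] using this

lemma trace_mul_nonneg' {m : Type*} [Fintype m] [DecidableEq m] {A B : Matrix m m ℝ}
    (hA : A.PosSemidef) (hB : B.PosSemidef) : 0 ≤ (A * B).trace := by
  obtain ⟨C, rfl⟩ : ∃ C : Matrix m m ℝ, B = Cᴴ * C := by
    open scoped MatrixOrder Matrix.Norms.L2Operator in
    exact CStarAlgebra.nonneg_iff_eq_star_mul_self.mp hB.nonneg
  rw [← Matrix.mul_assoc, Matrix.trace_mul_comm]
  rw [← Matrix.mul_assoc]
  exact trace_nonneg' (hA.mul_mul_conjTranspose_same C)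

lemma lamMax_pos {n : ℕ} (hn : 0 < n) {S : Matrix (Fin n) (Fin n) ℝ} (hS : S.PosDef) :
    0 < lamMax hS.1 := by
  have : Nonempty (Fin n) := ⟨⟨0, hn⟩⟩
  exact lt_of_lt_of_le (hS.eigenvalues_pos (Classical.arbitrary _))
    (le_ciSup (Set.Finite.bddAbove (Set.finite_range _)) _)

lemma inv_sub_smul_posSemidef {n : ℕ} (_hn : 0 < n) {S : Matrix (Fin n) (Fin n) ℝ}
    (hS : S.PosDef) :
    ((S⁻¹ - (lamMax hS.1)⁻¹ • 1) : Matrix (Fin n) (Fin n) ℝ).PosSemidef := by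
  set c : ℝ := (lamMax hS.1)⁻¹ with hc
  set U : Matrix (Fin n) (Fin n) ℝ := (hS.1.eigenvectorUnitary : Matrix (Fin n) (Fin n) ℝ) with hU
  set d : Fin n → ℝ := hS.1.eigenvalues with hd
  have hdpos : ∀ i, 0 < d i := hS.eigenvalues_pos
  have hbdd : BddAbove (Set.range d) := Set.Finite.bddAbove (Set.finite_range d)
  have hspec : S = U * diagonal (RCLike.ofReal ∘ d) * star U := hS.1.spectral_theorem
  have hUU : U * star U = 1 := (Matrix.mem_unitaryGroup_iff).mp hS.1.eigenvectorUnitary.2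
  have hUU' : star U * U = 1 := (Matrix.mem_unitaryGroup_iff').mp hS.1.eigenvectorUnitary.2
  have hdiag : (diagonal (RCLike.ofReal ∘ d) : Matrix (Fin n) (Fin n) ℝ) = diagonal d := rfl
  have hinv : S⁻¹ = U * diagonal (fun i => (d i)⁻¹) * star U := by
    apply Matrix.inv_eq_right_inv
    rw [hspec, hdiag]
    calc U * diagonal d * star U * (U * diagonal (fun i => (d i)⁻¹) * star U)
        = U * (diagonal d * (star U * U) * diagonal (fun i => (d i)⁻¹)) * star U := by
          noncomm_ring
      _ = 1 := by
          rw [hUU', mul_one, diagonal_mul_diagonal]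
          have : (fun i => d i * (d i)⁻¹) = fun _ => (1:ℝ) := by
            funext i; exact mul_inv_cancel₀ (hdpos i).ne'
          rw [this, diagonal_one, mul_one, hUU]
  have key : S⁻¹ - c • 1 = U * diagonal (fun i => (d i)⁻¹ - c) * star U := by
    rw [hinv]
    have h1 : (c • 1 : Matrix (Fin n) (Fin n) ℝ) = U * (c • 1) * star U := by
      rw [Matrix.mul_smul, Matrix.smul_mul, mul_one, hUU]
    rw [h1, ← Matrix.sub_mul, ← Matrix.mul_sub, Matrix.smul_one_eq_diagonal,
      diagonal_sub]
  rw [key]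
  apply Matrix.PosSemidef.mul_mul_conjTranspose_same
  apply Matrix.PosSemidef.diagonal
  intro i
  have h1 : d i ≤ lamMax hS.1 := le_ciSup hbdd i
  have : c ≤ (d i)⁻¹ := by
    rw [hc]
    exact inv_anti₀ (hdpos i) h1
  simpa using this

/-- For `S₁, S₂ ∈ S^n_{++}` and `ΔS = S₁ - S₂`:
`⟨S₁⁻¹ ΔS S₂⁻¹, ΔS⟩ ≥ λ_max(S₁)⁻¹ λ_max(S₂)⁻¹ ‖ΔS‖²`. -/
theorem stmt17 {n : ℕ} (hn : 0 < n) (S₁ S₂ : Matrix (Fin n) (Fin n) ℝ)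
    (h₁ : S₁.PosDef) (h₂ : S₂.PosDef) :
    tInner (S₁⁻¹ * (S₁ - S₂) * S₂⁻¹) (S₁ - S₂)
      ≥ (lamMax h₁.1)⁻¹ * (lamMax h₂.1)⁻¹ * frob (S₁ - S₂) ^ 2 := by
  set Δ : Matrix (Fin n) (Fin n) ℝ := S₁ - S₂ with hΔdef
  have hΔherm : Δ.IsHermitian := h₁.1.sub h₂.1
  have hΔT : Δᵀ = Δ := hΔherm
  have hΔH : Δᴴ = Δ := hΔherm
  set a : ℝ := (lamMax h₁.1)⁻¹ with ha
  set b : ℝ := (lamMax h₂.1)⁻¹ with hb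
  have hapos : 0 < a := inv_pos.mpr (lamMax_pos hn h₁)
  have hbpos : 0 < b := inv_pos.mpr (lamMax_pos hn h₂)
  have hS₁T : (S₁⁻¹)ᵀ = S₁⁻¹ := by
    rw [Matrix.transpose_nonsing_inv]; congr 1; exact h₁.1
  have hS₂T : (S₂⁻¹)ᵀ = S₂⁻¹ := by
    rw [Matrix.transpose_nonsing_inv]; congr 1; exact h₂.1
  -- rewrite the LHS as a trace
  have hLHS : tInner (S₁⁻¹ * Δ * S₂⁻¹) Δ = Matrix.trace (S₂⁻¹ * Δ * S₁⁻¹ * Δ) := by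
    rw [tInner, Matrix.transpose_mul, Matrix.transpose_mul, hS₁T, hS₂T, hΔT]
    rw [Matrix.mul_assoc, Matrix.mul_assoc, Matrix.mul_assoc, Matrix.mul_assoc]
  -- rewrite the RHS
  have hfrob : frob Δ ^ 2 = Matrix.trace (Δ * Δ) := by
    rw [frob, Real.sq_sqrt, tInner, hΔT]
    rw [tInner]
    have : Δᵀ * Δ = Δᴴ * Δ := by rw [hΔT, hΔH]
    rw [this]
    exact trace_nonneg' (Matrix.posSemidef_conjTranspose_mul_self Δ)
  have hP₁ : ((S₁⁻¹ - a • 1) : Matrix (Fin n) (Fin n) ℝ).PosSemidef :=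
    inv_sub_smul_posSemidef hn h₁
  have hP₂ : ((S₂⁻¹ - b • 1) : Matrix (Fin n) (Fin n) ℝ).PosSemidef :=
    inv_sub_smul_posSemidef hn h₂
  -- step 1
  have step1 : Matrix.trace (S₂⁻¹ * Δ * S₁⁻¹ * Δ)
      ≥ a * Matrix.trace (S₂⁻¹ * (Δ * Δ)) := by
    have hpsd : (Δ * (S₁⁻¹ - a • 1) * Δ).PosSemidef := by
      have := hP₁.mul_mul_conjTranspose_same Δ
      rwa [hΔH] at this
    have h0 : 0 ≤ Matrix.trace (S₂⁻¹ * (Δ * (S₁⁻¹ - a • 1) * Δ)) :=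
      trace_mul_nonneg' h₂.posSemidef.inv hpsd
    have hexp : Matrix.trace (S₂⁻¹ * (Δ * (S₁⁻¹ - a • 1) * Δ))
        = Matrix.trace (S₂⁻¹ * Δ * S₁⁻¹ * Δ) - a * Matrix.trace (S₂⁻¹ * (Δ * Δ)) := by
      simp only [Matrix.mul_sub, Matrix.sub_mul, Matrix.mul_smul, Matrix.smul_mul,
        Matrix.mul_one, Matrix.trace_sub, Matrix.trace_smul, smul_eq_mul, Matrix.mul_assoc]
    linarith [hexp ▸ h0]
  -- step 2
  have step2 : Matrix.trace (S₂⁻¹ * (Δ * Δ)) ≥ b * Matrix.trace (Δ * Δ) := by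
    have hpsd : (Δ * Δ).PosSemidef := by
      have := Matrix.posSemidef_conjTranspose_mul_self Δ
      rwa [hΔH] at this
    have h0 : 0 ≤ Matrix.trace ((S₂⁻¹ - b • 1) * (Δ * Δ)) := trace_mul_nonneg' hP₂ hpsd
    have hexp : Matrix.trace ((S₂⁻¹ - b • 1) * (Δ * Δ))
        = Matrix.trace (S₂⁻¹ * (Δ * Δ)) - b * Matrix.trace (Δ * Δ) := by
      simp only [Matrix.sub_mul, Matrix.smul_mul, Matrix.one_mul, Matrix.trace_sub,
        Matrix.trace_smul, smul_eq_mul]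
    linarith [hexp ▸ h0]
  rw [ge_iff_le, hLHS, hfrob]
  calc a * b * Matrix.trace (Δ * Δ) = a * (b * Matrix.trace (Δ * Δ)) := by ring
    _ ≤ a * Matrix.trace (S₂⁻¹ * (Δ * Δ)) := by
        exact mul_le_mul_of_nonneg_left step2 hapos.le
    _ ≤ Matrix.trace (S₂⁻¹ * Δ * S₁⁻¹ * Δ) := step1

end
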